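/- Let X be a finite metric space partitioned into m ≥ 1 pairwise disjoint groups X_1,…,X_m, let k_1,…,k_m ≥ 1 with |X_i| ≥ k_i for all i and k = k_1+⋯+k_m ≥ 2, and let μ > 0 with μ ≤ (m+1)/(3m+2) · OPT_f. Suppose S_μ ⊆ X is a greedy candidate on Y = X with threshold μ and capacity k, and for each i ∈ {1,…,m}, S_{μ,i} ⊆ X_i is a greedy candidate on Y = X_i with threshold μ and capacity k. Then |S_μ| = k and |S_{μ,i}| ≥ k_i for every i ∈ {1,…,m}. (The guess μ chosen in the proof of Theorem 4 belongs to the set U′ of guesses whose candidates are sufficiently full.) -/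

import Mathlib

open Finset

variable {α : Type*} [MetricSpace α] [DecidableEq α]

/-- A finite set `S` is `μ`-separated if `d(x,y) ≥ μ` for all distinct `x, y ∈ S`. -/
def Separated (μ : ℝ) (S : Finset α) : Prop :=
  ∀ x ∈ S, ∀ y ∈ S, x ≠ y → μ ≤ dist x y

/-- Max–min diversity of a finite set: the minimum pairwise distance over distinct pairs. -/
noncomputable def divers (S : Finset α) : ℝ :=
  sInf {r : ℝ | ∃ x ∈ S, ∃ y ∈ S, x ≠ y ∧ dist x y = r}

/-- Distance from a point to a (nonempty) finite set: `d(y,S) = min_{s ∈ S} d(y,s)`. -/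
noncomputable def setDist (y : α) (S : Finset α) : ℝ :=
  sInf {r : ℝ | ∃ s ∈ S, dist y s = r}

/-- Minimum pairwise distance over distinct pairs of `X`. -/
noncomputable def dMin (X : Finset α) : ℝ :=
  sInf {r : ℝ | ∃ x ∈ X, ∃ y ∈ X, x ≠ y ∧ dist x y = r}

/-- Maximum pairwise distance over distinct pairs of `X`. -/
noncomputable def dMax (X : Finset α) : ℝ :=
  sSup {r : ℝ | ∃ x ∈ X, ∃ y ∈ X, x ≠ y ∧ dist x y = r}

/-- The geometric grid of guesses `U = { d_min/(1-ε)^j : j ∈ ℕ } ∩ [d_min, d_max]`. -/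
def grid (X : Finset α) (ε : ℝ) : Set ℝ :=
  {μ | (∃ j : ℕ, μ = dMin X / (1 - ε) ^ j) ∧ dMin X ≤ μ ∧ μ ≤ dMax X}

/-- A greedy candidate on ground set `Y` with threshold `μ` and capacity `c`:
`S ⊆ Y`, `S` is `μ`-separated, `|S| ≤ c`, and if `|S| < c` then every `y ∈ Y`
satisfies `d(y,S) < μ` (i.e., has some element of `S` within distance `< μ`). -/
def GreedyCandidate (μ : ℝ) (c : ℕ) (Y S : Finset α) : Prop :=
  S ⊆ Y ∧ Separated μ S ∧ S.card ≤ c ∧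
    (S.card < c → ∀ y ∈ Y, ∃ s ∈ S, dist y s < μ)

/-- `OPT`: the maximum of `div(T)` over all `k`-element subsets `T ⊆ X`. -/
noncomputable def OPTk (X : Finset α) (k : ℕ) : ℝ :=
  sSup {r : ℝ | ∃ T ⊆ X, T.card = k ∧ divers T = r}

/-- `OPT_f`: the maximum of `div(S)` over all fair subsets `S ⊆ X`
(those with `|S ∩ X_i| = k_i` for every group `i`). -/
noncomputable def OPTf (X : Finset α) {m : ℕ} (Xg : Fin m → Finset α) (kg : Fin m → ℕ) : ℝ :=
  sSup {r : ℝ | ∃ S ⊆ X, (∀ i, (S ∩ Xg i).card = kg i) ∧ divers S = r}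

/-- The chain relation on `P` with threshold `τ`: the reflexive–transitive closure of
"both points are in `P` and their distance is `< τ`". -/
def ChainRel (P : Finset α) (τ : ℝ) : α → α → Prop :=
  Relation.ReflTransGen (fun x y => x ∈ P ∧ y ∈ P ∧ dist x y < τ)

lemma pigeon {μ : ℝ} (T S : Finset α) (hcard : S.card < T.card)
    (hcov : ∀ t ∈ T, ∃ s ∈ S, dist t s < μ)
    (hsep : ∀ x ∈ T, ∀ y ∈ T, x ≠ y → 2*μ ≤ dist x y) : False := by
  have hch : ∀ t : α, ∃ s : α, t ∈ T → s ∈ S ∧ dist t s < μ := by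
    intro t
    by_cases ht : t ∈ T
    · obtain ⟨s, hs, hd⟩ := hcov t ht; exact ⟨s, fun _ => ⟨hs, hd⟩⟩
    · exact ⟨t, fun h => absurd h ht⟩
  choose f hf using hch
  obtain ⟨x, hx, y, hy, hxy, hfeq⟩ :=
    Finset.exists_ne_map_eq_of_card_lt_of_maps_to hcard (fun a ha => (hf a ha).1)
  have h1 := (hf x hx).2
  have h2 := (hf y hy).2
  have h3 := hsep x hx y hy hxy
  have h4 : dist x y ≤ dist x (f x) + dist (f y) y := by
    rw [hfeq]; exact dist_triangle x (f y) y
  have h5 : dist (f y) y = dist y (f y) := dist_comm _ _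
  linarith

lemma exists_fair (X : Finset α) (m : ℕ) (Xg : Fin m → Finset α) (kg : Fin m → ℕ)
    (hcover : X = Finset.univ.biUnion Xg)
    (hdisj : ∀ i j, i ≠ j → Disjoint (Xg i) (Xg j))
    (hsize : ∀ i, kg i ≤ (Xg i).card) :
    ∃ S ⊆ X, ∀ i, (S ∩ Xg i).card = kg i := by
  choose t ht hc using fun i => Finset.exists_subset_card_eq (hsize i)
  refine ⟨Finset.univ.biUnion t, ?_, ?_⟩
  · rw [hcover]
    intro x hx
    simp only [Finset.mem_biUnion, Finset.mem_univ, true_and] at hx ⊢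
    obtain ⟨i, hi⟩ := hx
    exact ⟨i, ht i hi⟩
  · intro i
    have he : Finset.univ.biUnion t ∩ Xg i = t i := by
      ext x
      simp only [Finset.mem_inter, Finset.mem_biUnion, Finset.mem_univ, true_and]
      constructor
      · rintro ⟨⟨j, hj⟩, hxi⟩
        by_cases hij : j = i
        · subst hij; exact hj
        · exact absurd hxi (Finset.disjoint_left.mp (hdisj j i hij) (ht j hj))
      · intro hx; exact ⟨⟨i, hx⟩, ht i hx⟩
    rw [he, hc]

lemma fair_card (X : Finset α) (m : ℕ) (Xg : Fin m → Finset α) (kg : Fin m → ℕ)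
    (hcover : X = Finset.univ.biUnion Xg)
    (hdisj : ∀ i j, i ≠ j → Disjoint (Xg i) (Xg j))
    (T : Finset α) (hT : T ⊆ X) (hfair : ∀ i, (T ∩ Xg i).card = kg i) :
    T.card = ∑ i, kg i := by
  have he : T = Finset.univ.biUnion (fun i => T ∩ Xg i) := by
    ext x
    simp only [Finset.mem_biUnion, Finset.mem_univ, true_and, Finset.mem_inter]
    constructor
    · intro hx
      have := hT hx
      rw [hcover] at this
      simp only [Finset.mem_biUnion, Finset.mem_univ, true_and] at this
      obtain ⟨i, hi⟩ := this
      exact ⟨i, hx, hi⟩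
    · rintro ⟨i, hx, _⟩; exact hx
  rw [he, Finset.card_biUnion]
  · exact Finset.sum_congr rfl (fun i _ => hfair i)
  · intro i _ j _ hij
    exact (hdisj i j hij).mono (Finset.inter_subset_right) (Finset.inter_subset_right)

lemma opt_attained (X : Finset α) (m : ℕ) (Xg : Fin m → Finset α) (kg : Fin m → ℕ)
    (hcover : X = Finset.univ.biUnion Xg)
    (hdisj : ∀ i j, i ≠ j → Disjoint (Xg i) (Xg j))
    (hsize : ∀ i, kg i ≤ (Xg i).card) :
    ∃ T ⊆ X, (∀ i, (T ∩ Xg i).card = kg i) ∧ divers T = OPTf X Xg kg := by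
  set A : Set ℝ := {r : ℝ | ∃ S ⊆ X, (∀ i, (S ∩ Xg i).card = kg i) ∧ divers S = r} with hA
  have hfin : A.Finite := by
    have : A ⊆ divers '' (↑X.powerset : Set (Finset α)) := by
      rintro r ⟨S, hS, _, hdiv⟩
      exact ⟨S, by simpa using hS, hdiv⟩
    exact Set.Finite.subset (Set.Finite.image _ X.powerset.finite_toSet) this
  have hnA : A.Nonempty := by
    obtain ⟨S, hS, hfair⟩ := exists_fair X m Xg kg hcover hdisj hsize
    exact ⟨divers S, S, hS, hfair, rfl⟩
  have := hnA.csSup_mem hfin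
  obtain ⟨T, hT, hfair, hdiv⟩ := this
  exact ⟨T, hT, hfair, hdiv⟩

lemma divers_le_dist (T : Finset α) {x y : α} (hx : x ∈ T) (hy : y ∈ T) (hxy : x ≠ y) :
    divers T ≤ dist x y := by
  apply csInf_le
  · exact ⟨0, by rintro r ⟨a, _, b, _, _, rfl⟩; exact dist_nonneg⟩
  · exact ⟨x, hx, y, hy, hxy, rfl⟩

/-- The guess `μ ≤ ((m+1)/(3m+2))·OPT_f` chosen in the proof of Theorem 4 belongs to
`U'`: the group-blind candidate is full and every group-specific candidate has at
least `k_i` elements. -/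
theorem stmt_12 (X : Finset α) (m : ℕ) (hm : 1 ≤ m)
    (Xg : Fin m → Finset α) (kg : Fin m → ℕ)
    (hcover : X = Finset.univ.biUnion Xg)
    (hdisj : ∀ i j, i ≠ j → Disjoint (Xg i) (Xg j))
    (hne : ∀ i, (Xg i).Nonempty)
    (hkg : ∀ i, 1 ≤ kg i) (hsize : ∀ i, kg i ≤ (Xg i).card)
    (hk2 : 2 ≤ ∑ i, kg i)
    (μ : ℝ) (hμ : 0 < μ)
    (hμle : μ ≤ ((m : ℝ) + 1) / (3 * (m : ℝ) + 2) * OPTf X Xg kg)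
    (S₀ : Finset α) (hS₀ : GreedyCandidate μ (∑ i, kg i) X S₀)
    (Sg : Fin m → Finset α)
    (hSg : ∀ i, GreedyCandidate μ (∑ j, kg j) (Xg i) (Sg i)) :
    S₀.card = ∑ i, kg i ∧ ∀ i, kg i ≤ (Sg i).card := by
  obtain ⟨T, hTX, hfair, hdiv⟩ := opt_attained X m Xg kg hcover hdisj hsize
  have hTcard : T.card = ∑ i, kg i := fair_card X m Xg kg hcover hdisj T hTX hfair
  have hO : 2*μ ≤ OPTf X Xg kg := by
    have h3 : (0:ℝ) < 3*(m:ℝ)+2 := by positivity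
    rw [div_mul_eq_mul_div, le_div_iff₀ h3] at hμle
    have hm0 : (0:ℝ) ≤ m := Nat.cast_nonneg m
    nlinarith [mul_nonneg hm0 hμ.le]
  have hsepT : ∀ x ∈ T, ∀ y ∈ T, x ≠ y → 2*μ ≤ dist x y := by
    intro x hx y hy hxy
    calc 2*μ ≤ OPTf X Xg kg := hO
    _ = divers T := hdiv.symm
    _ ≤ dist x y := divers_le_dist T hx hy hxy
  obtain ⟨hsub₀, _, hle₀, hcond₀⟩ := hS₀
  constructor
  · by_contra h
    have hlt : S₀.card < ∑ i, kg i := lt_of_le_of_ne hle₀ h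
    exact pigeon T S₀ (by omega) (fun t ht => hcond₀ hlt t (hTX ht)) hsepT
  · intro i
    by_contra h
    push_neg at h
    obtain ⟨hsubi, _, hlei, hcondi⟩ := hSg i
    have hki : kg i ≤ ∑ j, kg j :=
      Finset.single_le_sum (fun j _ => Nat.zero_le _) (Finset.mem_univ i)
    have hlt : (Sg i).card < ∑ j, kg j := lt_of_lt_of_le h hki
    have hcardi : (T ∩ Xg i).card = kg i := hfair i
    refine pigeon (T ∩ Xg i) (Sg i) (by omega)
      (fun t ht => hcondi hlt t (Finset.mem_of_mem_inter_right ht)) ?_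
    intro x hx y hy hxy
    exact hsepT x (Finset.mem_of_mem_inter_left hx) y (Finset.mem_of_mem_inter_left hy) hxy
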